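/- arXiv:2402.13078 — 2 statements merged into one kernel-verified Lean document; each statement's English description precedes it below -/
import Mathlib

section
/- Let Ω ⊆ ℝ^N be open and C ⊆ Ω. The following are equivalent: (a) C is L^0-polar in Ω, i.e. there exists u ∈ L^0(Ω) with C ⊆ {x ∈ Ω : the approximate limit ũ(x) exists and |ũ(x)| = +∞}; (b) λ^N(C) = 0 (C has Lebesgue outer measure zero); (c) there exists a sequence of open sets U_k ⊆ Ω containing C with λ^N(U_k) → 0. -/
open MeasureTheory Metric Filter Set
open scoped ENNReal Topology symmDiff

noncomputable section

abbrev Euc (N : ℕ) : Type := EuclideanSpace ℝ (Fin N)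

variable {N : ℕ}

/-- The divergence of a vector field `φ : ℝ^N → ℝ^N`. -/
def diverg (φ : Euc N → Euc N) (x : Euc N) : ℝ :=
  ∑ i : Fin N, fderiv ℝ φ x (EuclideanSpace.single i 1) i

/-- The admissible test vector fields for the variation in `Ω`:
`C^1`, compactly supported in `Ω`, with `‖φ‖ ≤ 1`. -/
def TestVF (Ω : Set (Euc N)) : Set (Euc N → Euc N) :=
  {φ | ContDiff ℝ 1 φ ∧ HasCompactSupport φ ∧ tsupport φ ⊆ Ω ∧ ∀ x, ‖φ x‖ ≤ 1}

/-- The total variation `V(u, Ω)`. -/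
def variation (u : Euc N → ℝ) (Ω : Set (Euc N)) : ℝ≥0∞ :=
  ⨆ φ ∈ TestVF Ω, ENNReal.ofReal (∫ x in Ω, u x * diverg φ x)

/-- The perimeter `P(A, Ω)` of `A` in `Ω`. -/
def perimeter (A Ω : Set (Euc N)) : ℝ≥0∞ :=
  ⨆ φ ∈ TestVF Ω, ENNReal.ofReal (∫ x in A, diverg φ x)

/-- `u ∈ BV(Ω)`. -/
def MemBV (u : Euc N → ℝ) (Ω : Set (Euc N)) : Prop :=
  IntegrableOn u Ω volume ∧ variation u Ω < ⊤

/-- `u ∈ BV_loc(Ω)`. -/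
def MemBVloc (u : Euc N → ℝ) (Ω : Set (Euc N)) : Prop :=
  ∀ Ω' : Set (Euc N), IsOpen Ω' → IsCompact (closure Ω') → closure Ω' ⊆ Ω → MemBV u Ω'

/-- `u ∈ GBV(Ω)`: measurable, and every truncation `(-m) ∨ u ∧ m` is in `BV_loc(Ω)`. -/
def MemGBV (u : Euc N → ℝ) (Ω : Set (Euc N)) : Prop :=
  AEMeasurable u (volume.restrict Ω) ∧
    ∀ m : ℝ, 0 < m → MemBVloc (fun x => max (-m) (min (u x) m)) Ω

/-- `A` has locally finite perimeter in `Ω`. -/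
def HasLocFinPerimeter (A Ω : Set (Euc N)) : Prop :=
  ∀ Ω' : Set (Euc N), IsOpen Ω' → IsCompact (closure Ω') → closure Ω' ⊆ Ω →
    perimeter A Ω' < ⊤

/-- `A` has density `t` at `x`. -/
def HasDensity (A : Set (Euc N)) (x : Euc N) (t : ℝ) : Prop :=
  Tendsto (fun ρ : ℝ => volume (A ∩ ball x ρ) / volume (ball x ρ)) (𝓝[>] 0)
    (𝓝 (ENNReal.ofReal t))

/-- The approximate upper limit `u⁺(x)` of `u` at `x` (relative to `Ω`), with `inf ∅ = ⊤`. -/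
def approxUpper (u : Euc N → ℝ) (Ω : Set (Euc N)) (x : Euc N) : EReal :=
  sInf {t : EReal | ∃ s : ℝ, t = (s : EReal) ∧ HasDensity {y | y ∈ Ω ∧ s < u y} x 0}

/-- The approximate lower limit `u⁻(x)` of `u` at `x` (relative to `Ω`), with `sup ∅ = ⊥`. -/
def approxLower (u : Euc N → ℝ) (Ω : Set (Euc N)) (x : Euc N) : EReal :=
  sSup {t : EReal | ∃ s : ℝ, t = (s : EReal) ∧ HasDensity {y | y ∈ Ω ∧ u y < s} x 0}

/-- The approximate limit `ũ(x)` exists (i.e. `u⁺(x) = u⁻(x)`) and is `+∞`. -/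
def HasApproxLimitTop (u : Euc N → ℝ) (Ω : Set (Euc N)) (x : Euc N) : Prop :=
  approxUpper u Ω x = ⊤ ∧ approxLower u Ω x = ⊤

/-- The approximate limit `ũ(x)` exists and `|ũ(x)| = +∞`. -/
def HasInfApproxLimit (u : Euc N → ℝ) (Ω : Set (Euc N)) (x : Euc N) : Prop :=
  (approxUpper u Ω x = ⊤ ∧ approxLower u Ω x = ⊤) ∨
    (approxUpper u Ω x = ⊥ ∧ approxLower u Ω x = ⊥)

/-- `C` is `L⁰`-polar in `Ω`. -/
def L0Polar (C Ω : Set (Euc N)) : Prop :=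
  ∃ u : Euc N → ℝ, AEMeasurable u (volume.restrict Ω) ∧
    C ⊆ {x | x ∈ Ω ∧ HasInfApproxLimit u Ω x}

/-- `C` is `BV`-polar in `Ω`. -/
def BVPolar (C Ω : Set (Euc N)) : Prop :=
  ∃ u : Euc N → ℝ, MemBV u Ω ∧ C ⊆ {x | x ∈ Ω ∧ HasInfApproxLimit u Ω x}

/-- `C` is `GBV`-polar in `Ω`. -/
def GBVPolar (C Ω : Set (Euc N)) : Prop :=
  ∃ u : Euc N → ℝ, MemGBV u Ω ∧ C ⊆ {x | x ∈ Ω ∧ HasInfApproxLimit u Ω x}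

/-- The set `A^{(1)}` of points of `Ω` where `A` has density `1`. -/
def densityOne (A Ω : Set (Euc N)) : Set (Euc N) :=
  {x | x ∈ Ω ∧ HasDensity A x 1}

/-! ### Auxiliary lemmas -/

lemma volBall_ne_zero (x : Euc N) {ρ : ℝ} (hρ : 0 < ρ) : volume (ball x ρ) ≠ 0 :=
  (measure_ball_pos volume x hρ).ne'

lemma volBall_ne_top (x : Euc N) (ρ : ℝ) : volume (ball x ρ) ≠ ⊤ :=
  measure_ball_lt_top.ne

/-- Density zero at an interior point of `W`, for sets contained in `Wᶜ` up to a null set. -/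
lemma dens_zero {S W T : Set (Euc N)} {x : Euc N} (hW : IsOpen W) (hx : x ∈ W)
    (hT : volume T = 0) (hS : S ⊆ Wᶜ ∪ T) : HasDensity S x 0 := by
  unfold HasDensity
  rw [ENNReal.ofReal_zero]
  obtain ⟨ε, hε, hball⟩ := Metric.isOpen_iff.1 hW x hx
  have hev : ∀ᶠ ρ in 𝓝[>] (0:ℝ),
      (fun _ => (0:ℝ≥0∞)) ρ = volume (S ∩ ball x ρ) / volume (ball x ρ) := by
    filter_upwards [Ioo_mem_nhdsGT_of_mem ⟨le_rfl, hε⟩] with ρ hρ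
    have h1 : volume (S ∩ ball x ρ) = 0 := by
      refine measure_mono_null (fun y hy => ?_) hT
      rcases hS hy.1 with h | h
      · exact absurd (hball (ball_subset_ball hρ.2.le hy.2)) h
      · exact h
    simp [h1]
  exact Tendsto.congr' hev tendsto_const_nhds

/-- No density zero at an interior point of `W`, for sets containing `W` up to a null set. -/
lemma not_dens_zero {S W T : Set (Euc N)} {x : Euc N} (hW : IsOpen W) (hx : x ∈ W)
    (hT : volume T = 0) (hS : W \ T ⊆ S) : ¬ HasDensity S x 0 := by
  intro h
  unfold HasDensity at h
  rw [ENNReal.ofReal_zero] at h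
  obtain ⟨ε, hε, hball⟩ := Metric.isOpen_iff.1 hW x hx
  have hev : ∀ᶠ ρ in 𝓝[>] (0:ℝ),
      volume (S ∩ ball x ρ) / volume (ball x ρ) = (fun _ => (1:ℝ≥0∞)) ρ := by
    filter_upwards [Ioo_mem_nhdsGT_of_mem ⟨le_rfl, hε⟩] with ρ hρ
    have hsub : ball x ρ \ T ⊆ S ∩ ball x ρ := fun y hy =>
      ⟨hS ⟨hball (ball_subset_ball hρ.2.le hy.1), hy.2⟩, hy.1⟩
    have h1 : volume (S ∩ ball x ρ) = volume (ball x ρ) := by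
      refine le_antisymm (measure_mono inter_subset_right) ?_
      calc volume (ball x ρ) = volume (ball x ρ \ T) := (measure_diff_null hT).symm
        _ ≤ volume (S ∩ ball x ρ) := measure_mono hsub
    rw [h1, ENNReal.div_self (volBall_ne_zero x hρ.1) (volBall_ne_top x ρ)]
  have h01 : (0:ℝ≥0∞) = 1 := tendsto_nhds_unique (Tendsto.congr' hev h) tendsto_const_nhds
  exact zero_ne_one h01

/-- Density zero passes to subsets mod null sets. -/
lemma dens_zero_mono {S S' T : Set (Euc N)} {x : Euc N} (hsub : S' ⊆ S ∪ T)
    (hT : volume T = 0) (h : HasDensity S x 0) : HasDensity S' x 0 := by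
  unfold HasDensity at h ⊢
  rw [ENNReal.ofReal_zero] at h ⊢
  refine tendsto_of_tendsto_of_tendsto_of_le_of_le tendsto_const_nhds h
    (fun ρ => zero_le) (fun ρ => ?_)
  refine ENNReal.div_le_div_right ?_ _
  calc volume (S' ∩ ball x ρ)
      ≤ volume ((S ∩ ball x ρ) ∪ T) := by
        refine measure_mono fun y hy => ?_
        rcases hsub hy.1 with h' | h'
        · exact Or.inl ⟨h', hy.2⟩
        · exact Or.inr h'
    _ ≤ volume (S ∩ ball x ρ) + volume T := measure_union_le _ _
    _ = volume (S ∩ ball x ρ) := by rw [hT, add_zero]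

lemma vol_closedBall_eq (x : Euc N) {ρ : ℝ} (hρ : 0 < ρ) :
    volume (closedBall x ρ) = volume (ball x ρ) := by
  refine le_antisymm ?_ (measure_mono ball_subset_closedBall)
  calc volume (closedBall x ρ) = volume (ball x ρ ∪ sphere x ρ) := by rw [ball_union_sphere]
    _ ≤ volume (ball x ρ) + volume (sphere x ρ) := measure_union_le _ _
    _ = volume (ball x ρ) := by
        rw [Measure.addHaar_sphere_of_ne_zero volume x hρ.ne', add_zero]

lemma vol_inter_closedBall_eq (S : Set (Euc N)) (x : Euc N) {ρ : ℝ} (hρ : 0 < ρ) :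
    volume (S ∩ closedBall x ρ) = volume (S ∩ ball x ρ) := by
  refine le_antisymm ?_ (measure_mono (inter_subset_inter_right _ ball_subset_closedBall))
  calc volume (S ∩ closedBall x ρ)
      ≤ volume ((S ∩ ball x ρ) ∪ sphere x ρ) := by
        refine measure_mono fun y hy => ?_
        have hy2 : y ∈ ball x ρ ∪ sphere x ρ := by rw [ball_union_sphere]; exact hy.2
        rcases hy2 with h | h
        · exact Or.inl ⟨hy.1, h⟩
        · exact Or.inr h
    _ ≤ volume (S ∩ ball x ρ) + volume (sphere x ρ) := measure_union_le _ _
    _ = volume (S ∩ ball x ρ) := by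
        rw [Measure.addHaar_sphere_of_ne_zero volume x hρ.ne', add_zero]

/-- Lebesgue density theorem, open-ball version, for arbitrary sets. -/
lemma ae_density_one (S : Set (Euc N)) :
    ∀ᵐ x ∂(volume.restrict S),
      Tendsto (fun ρ => volume (S ∩ ball x ρ) / volume (ball x ρ)) (𝓝[>] 0) (𝓝 1) := by
  filter_upwards [Besicovitch.ae_tendsto_measure_inter_div volume S] with x hx
  refine hx.congr' ?_
  filter_upwards [self_mem_nhdsWithin] with ρ (hρ : (0:ℝ) < ρ)
  rw [vol_closedBall_eq x hρ, vol_inter_closedBall_eq S x hρ]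

/-- For `C ⊆ Ω ⊆ ℝ^N` (`Ω` open), the following are equivalent:
(a) `C` is `L⁰`-polar in `Ω`; (b) `λ^N(C) = 0`;
(c) there is a sequence of open sets `U_k ⊆ Ω` containing `C` with `λ^N(U_k) → 0`. -/
theorem statement0 {N : ℕ} (Ω : Set (Euc N)) (hΩ : IsOpen Ω)
    (C : Set (Euc N)) (hC : C ⊆ Ω) :
    (L0Polar C Ω ↔ volume C = 0) ∧
    (volume C = 0 ↔
      ∃ U : ℕ → Set (Euc N), (∀ k, IsOpen (U k) ∧ U k ⊆ Ω ∧ C ⊆ U k) ∧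
        Tendsto (fun k => volume (U k)) atTop (𝓝 0)) := by
  -- (b) → (a): construction of a polar function from a null set
  have hba : volume C = 0 → L0Polar C Ω := by
    intro h0
    have hlt : ∀ k : ℕ, volume C < (2⁻¹ : ℝ≥0∞) ^ k := fun k => by
      rw [h0]; exact ENNReal.pow_pos (ENNReal.inv_pos.2 ENNReal.ofNat_ne_top) k
    choose V hVsub hVopen hVlt using fun k => Set.exists_isOpen_lt_of_lt C _ (hlt k)
    set v : Euc N → ℝ≥0∞ := fun y => ∑' k, (V k).indicator (fun _ => (1:ℝ≥0∞)) y with hv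
    set u : Euc N → ℝ := fun y => (v y).toReal with huu
    have hvm : Measurable v :=
      Measurable.ennreal_tsum fun k => measurable_const.indicator (hVopen k).measurableSet
    have hum : Measurable u := hvm.ennreal_toReal
    have hvint : ∫⁻ y, v y ∂volume ≠ ⊤ := by
      rw [hv]
      simp only []
      rw [lintegral_tsum fun k =>
        (measurable_const.indicator (hVopen k).measurableSet).aemeasurable]
      have hind : ∀ k, ∫⁻ y, (V k).indicator (fun _ => (1:ℝ≥0∞)) y ∂volume = volume (V k) :=
        fun k => by rw [lintegral_indicator (hVopen k).measurableSet]; simp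
      have hle : ∑' k, ∫⁻ y, (V k).indicator (fun _ => (1:ℝ≥0∞)) y ∂volume
          ≤ ∑' k : ℕ, (2⁻¹ : ℝ≥0∞) ^ k := by
        refine ENNReal.tsum_le_tsum fun k => ?_
        rw [hind k]; exact (hVlt k).le
      refine ne_top_of_le_ne_top ?_ hle
      rw [ENNReal.tsum_geometric]
      simp [ENNReal.sub_half]
    have hT : volume {y | ¬ v y < ⊤} = 0 := by
      have hae := ae_lt_top hvm hvint
      rwa [ae_iff] at hae
    set T := {y | ¬ v y < ⊤} with hTdef
    -- on ⋂_{k ≤ m} V k minus T, u is at least m+1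
    have hbig : ∀ (m : ℕ) (y : Euc N), (∀ k ≤ m, y ∈ V k) → y ∉ T → ((m:ℝ) + 1) ≤ u y := by
      intro m y hy hyT
      have hvy : v y ≠ ⊤ := by simpa [hTdef, lt_top_iff_ne_top] using hyT
      have hsum : ((m:ℝ≥0∞) + 1)
          ≤ v y := by
        have h1 : ∑ k ∈ Finset.range (m+1), (V k).indicator (fun _ => (1:ℝ≥0∞)) y
            = (m : ℝ≥0∞) + 1 := by
          have : ∀ k ∈ Finset.range (m+1), (V k).indicator (fun _ => (1:ℝ≥0∞)) y = 1 := by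
            intro k hk
            exact Set.indicator_of_mem (hy k (Nat.lt_succ_iff.1 (Finset.mem_range.1 hk))) _
          rw [Finset.sum_congr rfl this]
          simp [Finset.card_range]
        calc ((m:ℝ≥0∞) + 1) = ∑ k ∈ Finset.range (m+1), (V k).indicator (fun _ => (1:ℝ≥0∞)) y :=
              h1.symm
          _ ≤ v y := ENNReal.sum_le_tsum _
      have := ENNReal.toReal_mono hvy hsum
      have e : ((m:ℝ≥0∞) + 1).toReal = (m:ℝ) + 1 := by
        rw [ENNReal.toReal_add (by simp) (by simp)]; simp
      rw [e] at this; exact this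
    refine ⟨u, hum.aemeasurable, fun x hx => ⟨hC hx, Or.inl ⟨?_, ?_⟩⟩⟩
    · -- approxUpper = ⊤ : the defining set is empty
      have hempty : {t : EReal | ∃ s : ℝ, t = (s : EReal) ∧
          HasDensity {y | y ∈ Ω ∧ s < u y} x 0} = ∅ := by
        rw [Set.eq_empty_iff_forall_notMem]
        rintro t ⟨s, rfl, hds⟩
        obtain ⟨m, hm⟩ := exists_nat_gt s
        set W := Ω ∩ ⋂ k ∈ Finset.range (m+1), V k with hW
        have hWopen : IsOpen W := hΩ.inter (isOpen_biInter_finset fun k _ => hVopen k)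
        have hxW : x ∈ W := ⟨hC hx, Set.mem_biInter fun k _ => hVsub k hx⟩
        refine not_dens_zero hWopen hxW hT (fun y hy => ?_) hds
        refine ⟨hy.1.1, ?_⟩
        have hy2 : ∀ k ≤ m, y ∈ V k := fun k hk =>
          Set.mem_iInter₂.1 hy.1.2 k (Finset.mem_range.2 (Nat.lt_succ_of_le hk))
        have := hbig m y hy2 hy.2
        linarith
      rw [approxUpper, hempty, sInf_empty]
    · -- approxLower = ⊤ : the defining set is unbounded above
      rw [approxLower, sSup_eq_top]
      intro b hb
      obtain ⟨c, hbc, hct⟩ := exists_between hb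
      induction c with
      | bot => exact absurd hbc (by simp)
      | top => exact absurd hct (lt_irrefl _)
      | coe r =>
        obtain ⟨m, hm⟩ := exists_nat_gt r
        refine ⟨(((m:ℝ) + 1 : ℝ) : EReal), ⟨(m:ℝ) + 1, rfl, ?_⟩, ?_⟩
        · set W := ⋂ k ∈ Finset.range (m+1), V k with hW
          have hWopen : IsOpen W := isOpen_biInter_finset fun k _ => hVopen k
          have hxW : x ∈ W := Set.mem_biInter fun k _ => hVsub k hx
          refine dens_zero hWopen hxW hT (fun y hy => ?_)
          by_cases hyW : y ∈ W
          · by_cases hyT : y ∈ T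
            · exact Or.inr hyT
            · exfalso
              have hy2 : ∀ k ≤ m, y ∈ V k := fun k hk =>
                Set.mem_iInter₂.1 hyW k (Finset.mem_range.2 (Nat.lt_succ_of_le hk))
              have := hbig m y hy2 hyT
              have := hy.2
              linarith
          · exact Or.inl hyW
        · refine lt_trans hbc ?_
          have hr : r < (m:ℝ) + 1 := by linarith
          exact_mod_cast hr
  -- (a) → (b): a polar set is null
  have hab : L0Polar C Ω → volume C = 0 := by
    rintro ⟨u, hu, hsub⟩
    obtain ⟨g, hgm, hug⟩ := hu
    set N₀ := {y | y ∈ Ω ∧ u y ≠ g y} with hN₀def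
    have hN₀ : volume N₀ = 0 := by
      have h := (ae_restrict_iff' hΩ.measurableSet).1 hug
      rw [ae_iff] at h
      refine measure_mono_null (fun y hy => ?_) h
      exact fun hcon => hy.2 (hcon hy.1)
    set G : ℕ → Set (Euc N) := fun n => Ω ∩ {y | |g y| < n} with hGdef
    have hGmeas : ∀ n, MeasurableSet (G n) :=
      fun n => hΩ.measurableSet.inter (measurableSet_lt hgm.abs measurable_const)
    set Bad : ℕ → Set (Euc N) := fun n =>
      {x | ¬ Tendsto (fun ρ => volume (G n ∩ ball x ρ) / volume (ball x ρ)) (𝓝[>] 0) (𝓝 1)}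
      with hBaddef
    have hBad : ∀ n, volume (Bad n ∩ G n) = 0 := by
      intro n
      have h := ae_density_one (G n)
      rw [ae_iff] at h
      rw [Measure.restrict_apply' (hGmeas n)] at h
      exact h
    have hcover : C ⊆ N₀ ∪ ⋃ n, (Bad n ∩ G n) := by
      intro x hx
      by_contra hxc
      rw [Set.mem_union] at hxc
      push_neg at hxc
      obtain ⟨hxN₀, hxBad⟩ := hxc
      simp only [Set.mem_iUnion] at hxBad
      push_neg at hxBad
      obtain ⟨hxΩ, hxinf⟩ := hsub hx
      have hux : u x = g x := by
        by_contra hne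
        exact hxN₀ ⟨hxΩ, hne⟩
      obtain ⟨n, hn⟩ := exists_nat_gt (|g x|)
      have hxG : x ∈ G n := ⟨hxΩ, hn⟩
      have hxGood : Tendsto (fun ρ => volume (G n ∩ ball x ρ) / volume (ball x ρ))
          (𝓝[>] 0) (𝓝 1) := by
        by_contra hcon
        exact hxBad n ⟨hcon, hxG⟩
      have hkey : ¬ HasDensity (G n) x 0 := by
        intro h
        have h0 : Tendsto (fun ρ => volume (G n ∩ ball x ρ) / volume (ball x ρ))
            (𝓝[>] 0) (𝓝 0) := by
          have := h; unfold HasDensity at this; rwa [ENNReal.ofReal_zero] at this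
        exact zero_ne_one (tendsto_nhds_unique h0 hxGood)
      rcases hxinf with ⟨hup, hlo⟩ | ⟨hup, hlo⟩
      · -- approxLower = ⊤
        rw [approxLower, sSup_eq_top] at hlo
        obtain ⟨t, ht, hnt⟩ := hlo ((n:ℝ) : EReal) (EReal.coe_lt_top _)
        obtain ⟨s, rfl, hds⟩ := ht
        have hns : (n:ℝ) < s := by exact_mod_cast hnt
        refine hkey (dens_zero_mono (T := N₀) (fun y hy => ?_) hN₀ hds)
        by_cases hyN₀ : y ∈ N₀
        · exact Or.inr hyN₀
        · refine Or.inl ⟨hy.1, ?_⟩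
          have huy : u y = g y := by
            by_contra hne
            exact hyN₀ ⟨hy.1, hne⟩
          rw [huy]
          calc g y ≤ |g y| := le_abs_self _
            _ < n := hy.2
            _ < s := hns
      · -- approxUpper = ⊥
        rw [approxUpper, sInf_eq_bot] at hup
        obtain ⟨t, ht, hnt⟩ := hup ((-(n:ℝ)) : EReal) (EReal.bot_lt_coe _)
        obtain ⟨s, rfl, hds⟩ := ht
        have hns : s < -(n:ℝ) := by exact_mod_cast hnt
        refine hkey (dens_zero_mono (T := N₀) (fun y hy => ?_) hN₀ hds)
        by_cases hyN₀ : y ∈ N₀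
        · exact Or.inr hyN₀
        · refine Or.inl ⟨hy.1, ?_⟩
          have huy : u y = g y := by
            by_contra hne
            exact hyN₀ ⟨hy.1, hne⟩
          rw [huy]
          have h1 : -(n:ℝ) < g y := neg_lt_of_abs_lt hy.2
          linarith
    refine measure_mono_null hcover ?_
    rw [measure_union_null_iff]
    exact ⟨hN₀, measure_iUnion_null hBad⟩
  constructor
  · exact ⟨hab, hba⟩
  · constructor
    · intro h0
      have hlt : ∀ k : ℕ, volume C < (2⁻¹ : ℝ≥0∞) ^ k := fun k => by
        rw [h0]; exact ENNReal.pow_pos (ENNReal.inv_pos.2 ENNReal.ofNat_ne_top) k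
      choose V hVsub hVopen hVlt using fun k => Set.exists_isOpen_lt_of_lt C _ (hlt k)
      refine ⟨fun k => V k ∩ Ω, fun k =>
        ⟨(hVopen k).inter hΩ, inter_subset_right, fun y hy => ⟨hVsub k hy, hC hy⟩⟩, ?_⟩
      have h1 : Tendsto (fun k : ℕ => (2⁻¹ : ℝ≥0∞) ^ k) atTop (𝓝 0) :=
        ENNReal.tendsto_pow_atTop_nhds_zero_of_lt_one (by norm_num)
      refine tendsto_of_tendsto_of_tendsto_of_le_of_le tendsto_const_nhds h1
        (fun k => zero_le) (fun k => ?_)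
      exact le_trans (measure_mono inter_subset_left) (hVlt k).le
    · rintro ⟨U, hU, hT⟩
      have h := ge_of_tendsto' hT (fun k => measure_mono (hU k).2.2)
      exact le_antisymm h (zero_le)
end
end

section
/- Let Ω ⊆ ℝ^N be open and let C ⊆ Ω be relatively closed in Ω with λ^N(C) = 0. Then C is GBV-polar in Ω, i.e. there exists u ∈ GBV(Ω) with C ⊆ {x ∈ Ω : the approximate limit ũ(x) exists and |ũ(x)| = +∞}. -/
open MeasureTheory Metric Filter Set
open scoped ENNReal NNReal Topology symmDiff

noncomputable section

variable {N : ℕ}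

lemma coord_abs_le_norm {N : ℕ} (f : Euc N) (i : Fin N) : |f i| ≤ ‖f‖ := by
  rw [EuclideanSpace.norm_eq]
  rw [show |f i| = Real.sqrt (‖f i‖ ^ 2) by rw [Real.sqrt_sq_eq_abs, Real.norm_eq_abs, abs_abs]]
  apply Real.sqrt_le_sqrt
  exact Finset.single_le_sum (f := fun j => ‖f j‖ ^ 2) (fun j _ => by positivity) (Finset.mem_univ i)

lemma key_ibp_bound {N : ℕ} (v : Euc N → ℝ) {L : ℝ≥0} (hv : LipschitzWith L v)
    (ψ : Euc N → ℝ) (hψ : ContDiff ℝ 1 ψ) (hψc : HasCompactSupport ψ) (e : Euc N) :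
    |∫ x, v x * fderiv ℝ ψ x e| ≤ (L : ℝ) * ‖e‖ * ∫ x, |ψ x| := by
  obtain ⟨Kψ, hKψ⟩ := hψ.lipschitzWith_of_hasCompactSupport hψc one_ne_zero
  have hcψ : Continuous ψ := hψ.continuous
  have hcv : Continuous v := hv.continuous
  -- integrability of various functions
  have hint_shift : ∀ a : Euc N, Integrable (fun x : Euc N => v x * ψ (x + a)) := by
    intro a
    have hsupp : HasCompactSupport (fun x : Euc N => ψ (x + a)) :=
      hψc.comp_homeomorph (Homeomorph.addRight a)
    have hcont : Continuous fun x : Euc N => v x * ψ (x + a) :=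
      hcv.mul (hcψ.comp (continuous_id.add continuous_const))
    exact hcont.integrable_of_hasCompactSupport (hsupp.mul_left)
  have hint0 : Integrable (fun x : Euc N => v x * ψ x) := by
    simpa using hint_shift 0
  have hintabs : Integrable (fun x : Euc N => |ψ x|) :=
    (hcψ.integrable_of_hasCompactSupport hψc).abs
  -- the difference quotients
  set G : ℝ → ℝ := fun h => ∫ x, v x * ((ψ (x + h • e) - ψ x) / h) with hG
  -- Step 2 : the uniform bound on G
  have hbound : ∀ h : ℝ, h ≠ 0 → |G h| ≤ (L : ℝ) * ‖e‖ * ∫ x, |ψ x| := by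
    intro h hh
    have htrans : ∫ x, v x * ψ (x + h • e) = ∫ x, v (x - h • e) * ψ x := by
      have := integral_add_right_eq_self (μ := volume) (fun x : Euc N => v (x - h • e) * ψ x) (h • e)
      simpa using this
    have hint1 : Integrable (fun x : Euc N => v (x - h • e) * ψ x) := by
      have hcont : Continuous fun x : Euc N => v (x - h • e) * ψ x :=
        (hcv.comp (continuous_id.sub continuous_const)).mul hcψ
      exact hcont.integrable_of_hasCompactSupport (hψc.mul_left)
    have hGeq : G h = ∫ x, ((v (x - h • e) - v x) / h) * ψ x := by
      have e0 : (fun x : Euc N => v x * ((ψ (x + h • e) - ψ x) / h))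
          = fun x : Euc N => (1/h) * (v x * ψ (x + h • e) - v x * ψ x) := by
        funext x; ring
      have e2 : (fun x : Euc N => ((v (x - h • e) - v x) / h) * ψ x)
          = fun x : Euc N => (1/h) * (v (x - h • e) * ψ x - v x * ψ x) := by
        funext x; ring
      rw [hG]; simp only [e0, e2]
      rw [integral_const_mul, integral_const_mul, integral_sub (hint_shift _) hint0,
        integral_sub hint1 hint0, htrans]
    rw [hGeq]
    have step : ∀ x : Euc N, |((v (x - h • e) - v x) / h) * ψ x| ≤ (L : ℝ) * ‖e‖ * |ψ x| := by
      intro x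
      rw [abs_mul]
      apply mul_le_mul_of_nonneg_right _ (abs_nonneg _)
      rw [abs_div, div_le_iff₀ (abs_pos.2 hh)]
      calc |v (x - h • e) - v x| ≤ (L : ℝ) * ‖(x - h • e) - x‖ := by
            have := hv.dist_le_mul (x - h • e) x
            rwa [Real.dist_eq, dist_eq_norm] at this
        _ = (L : ℝ) * (‖e‖ * |h|) := by
            congr 1
            simp [norm_smul, abs_mul, mul_comm]
        _ = (L : ℝ) * ‖e‖ * |h| := by ring
    have hintL : Integrable (fun x : Euc N => |((v (x - h • e) - v x) / h) * ψ x|) := by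
      apply Integrable.abs
      have hcont : Continuous fun x : Euc N => ((v (x - h • e) - v x) / h) * ψ x :=
        (((hcv.comp (continuous_id.sub continuous_const)).sub hcv).div_const h).mul hcψ
      exact hcont.integrable_of_hasCompactSupport (hψc.mul_left)
    calc |∫ x, ((v (x - h • e) - v x) / h) * ψ x|
        ≤ ∫ x, |((v (x - h • e) - v x) / h) * ψ x| := by
          simpa only [Real.norm_eq_abs] using
            norm_integral_le_integral_norm (fun x : Euc N => ((v (x - h • e) - v x) / h) * ψ x)
      _ ≤ ∫ x, (L : ℝ) * ‖e‖ * |ψ x| := integral_mono hintL (hintabs.const_mul _) step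
      _ = (L : ℝ) * ‖e‖ * ∫ x, |ψ x| := integral_const_mul _ _
  -- Step 1: dominated convergence
  have hK : IsCompact (cthickening ‖e‖ (tsupport ψ)) := hψc.cthickening
  obtain ⟨C0, hC0⟩ := hK.exists_bound_of_continuousOn hcv.continuousOn
  set Mv : ℝ := max C0 0 with hMv
  set B : ℝ := Mv * ((Kψ : ℝ) * ‖e‖) with hB
  set bound : Euc N → ℝ := (cthickening ‖e‖ (tsupport ψ)).indicator (fun _ => B) with hbnd
  have hbint : Integrable bound := by
    rw [hbnd, integrable_indicator_iff hK.measurableSet]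
    exact integrableOn_const hK.measure_lt_top.ne
  have hquot : ∀ (h : ℝ) (x : Euc N), h ≠ 0 → |(ψ (x + h • e) - ψ x) / h| ≤ (Kψ : ℝ) * ‖e‖ := by
    intro h x hh
    rw [abs_div, div_le_iff₀ (abs_pos.2 hh)]
    calc |ψ (x + h • e) - ψ x| ≤ (Kψ : ℝ) * ‖(x + h • e) - x‖ := by
          have := hKψ.dist_le_mul (x + h • e) x
          rwa [Real.dist_eq, dist_eq_norm] at this
      _ = (Kψ : ℝ) * (‖e‖ * |h|) := by
          congr 1; simp [norm_smul, abs_mul, mul_comm]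
      _ = (Kψ : ℝ) * ‖e‖ * |h| := by ring
  have h_bound : ∀ᶠ h in 𝓝[≠] (0:ℝ), ∀ᵐ x : Euc N ∂volume,
      ‖v x * ((ψ (x + h • e) - ψ x) / h)‖ ≤ bound x := by
    have h1 : ∀ᶠ h in 𝓝[≠] (0:ℝ), |h| ≤ 1 := by
      apply eventually_nhdsWithin_of_eventually_nhds
      filter_upwards [Metric.ball_mem_nhds (0:ℝ) one_pos] with h hh
      exact le_of_lt (by simpa [Real.dist_eq] using hh)
    have h2 : ∀ᶠ h in 𝓝[≠] (0:ℝ), h ≠ 0 := self_mem_nhdsWithin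
    filter_upwards [h1, h2] with h hh1 hh2
    apply Filter.Eventually.of_forall
    intro x
    by_cases hx : x ∈ cthickening ‖e‖ (tsupport ψ)
    · have hb : bound x = B := by rw [hbnd, indicator_of_mem hx]
      rw [hb, Real.norm_eq_abs, abs_mul, hB]
      have hva : |v x| ≤ Mv :=
        le_trans (by simpa [Real.norm_eq_abs] using hC0 x hx) (le_max_left _ _)
      exact mul_le_mul hva (hquot h x hh2) (abs_nonneg _) (le_max_right _ _)
    · have hb : bound x = 0 := by rw [hbnd, indicator_of_notMem hx]
      have hx1 : ψ x = 0 := by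
        apply image_eq_zero_of_notMem_tsupport
        intro hmem
        exact hx (self_subset_cthickening _ hmem)
      have hx2 : ψ (x + h • e) = 0 := by
        apply image_eq_zero_of_notMem_tsupport
        intro hmem
        apply hx
        apply mem_cthickening_of_dist_le x (x + h • e) _ _ hmem
        calc dist x (x + h • e) = ‖h • e‖ := by
              rw [dist_eq_norm]; simp
          _ = |h| * ‖e‖ := by rw [norm_smul, Real.norm_eq_abs]
          _ ≤ 1 * ‖e‖ := by apply mul_le_mul_of_nonneg_right hh1 (norm_nonneg _)
          _ = ‖e‖ := one_mul _
      rw [hb, hx1, hx2]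
      simp
  have h_lim : ∀ᵐ x : Euc N ∂volume, Tendsto (fun h : ℝ => v x * ((ψ (x + h • e) - ψ x) / h))
      (𝓝[≠] (0:ℝ)) (𝓝 (v x * fderiv ℝ ψ x e)) := by
    apply Filter.Eventually.of_forall
    intro x
    have h1 : HasDerivAt (fun t : ℝ => x + t • e) e 0 := by
      simpa using ((hasDerivAt_id (0:ℝ)).smul_const e).const_add x
    have h2 : HasFDerivAt ψ (fderiv ℝ ψ x) (x + (0:ℝ) • e) := by
      simpa using (hψ.differentiable one_ne_zero x).hasFDerivAt
    have hd : HasDerivAt (fun t : ℝ => ψ (x + t • e)) (fderiv ℝ ψ x e) 0 := by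
      exact h2.comp_hasDerivAt 0 h1
    refine Tendsto.congr (fun h => ?_) ((hasDerivAt_iff_tendsto_slope.1 hd).const_mul (v x))
    simp [slope_def_field]
  have h_meas : ∀ᶠ h in 𝓝[≠] (0:ℝ),
      AEStronglyMeasurable (fun x : Euc N => v x * ((ψ (x + h • e) - ψ x) / h)) volume := by
    apply Filter.Eventually.of_forall
    intro h
    exact (hcv.mul (((hcψ.comp (continuous_id.add continuous_const)).sub hcψ).div_const h)).aestronglyMeasurable
  have hGlim : Tendsto G (𝓝[≠] (0:ℝ)) (𝓝 (∫ x, v x * fderiv ℝ ψ x e)) :=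
    tendsto_integral_filter_of_dominated_convergence bound h_meas h_bound hbint h_lim
  have habs : Tendsto (fun h => |G h|) (𝓝[≠] (0:ℝ)) (𝓝 |∫ x, v x * fderiv ℝ ψ x e|) :=
    hGlim.abs
  apply le_of_tendsto habs
  filter_upwards [self_mem_nhdsWithin] with h hh
  exact hbound h hh

lemma variation_le_of_lipschitz {N : ℕ} (v : Euc N → ℝ) {L : ℝ≥0} (hv : LipschitzWith L v)
    (Ω' : Set (Euc N)) (hcomp : IsCompact (closure Ω')) :
    variation v Ω' ≤ ENNReal.ofReal ((L : ℝ) * N * (volume (closure Ω')).toReal) := by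
  apply iSup₂_le
  intro φ hφ
  obtain ⟨hφ1, hφ2, hφ3, hφ4⟩ := hφ
  apply ENNReal.ofReal_le_ofReal
  have hdiff := hφ1.differentiable one_ne_zero
  set e : Fin N → Euc N := fun i => EuclideanSpace.single i 1 with he
  set ψ : Fin N → Euc N → ℝ := fun i x => φ x i with hψ
  have hψC1 : ∀ i, ContDiff ℝ 1 (ψ i) := fun i =>
    (EuclideanSpace.proj (𝕜 := ℝ) i).contDiff.comp hφ1
  have hψc : ∀ i, HasCompactSupport (ψ i) := fun i =>
    hφ2.comp_left (g := fun y : Euc N => y i) rfl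
  have hfd : ∀ i x, fderiv ℝ (ψ i) x (e i) = fderiv ℝ φ x (e i) i := by
    intro i x
    have h := ((EuclideanSpace.proj (𝕜 := ℝ) i).hasFDerivAt.comp x (hdiff x).hasFDerivAt).fderiv
    have : ψ i = (EuclideanSpace.proj (𝕜 := ℝ) i) ∘ φ := rfl
    rw [this, h]
    rfl
  have hcont_i : ∀ i, Continuous fun x => v x * fderiv ℝ (ψ i) x (e i) := by
    intro i
    exact hv.continuous.mul
      ((ContinuousLinearMap.apply ℝ ℝ (e i)).continuous.comp
        ((hψC1 i).continuous_fderiv one_ne_zero))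
  have hsupp_i : ∀ i, HasCompactSupport fun x => v x * fderiv ℝ (ψ i) x (e i) := by
    intro i
    exact HasCompactSupport.mul_left
      (((hψc i).fderiv ℝ).comp_left (g := fun l : Euc N →L[ℝ] ℝ => l (e i)) rfl)
  have hint_i : ∀ i, Integrable fun x => v x * fderiv ℝ (ψ i) x (e i) := fun i =>
    (hcont_i i).integrable_of_hasCompactSupport (hsupp_i i)
  have heq1 : ∫ x in Ω', v x * diverg φ x = ∫ x, v x * diverg φ x := by
    apply setIntegral_eq_integral_of_forall_compl_eq_zero
    intro x hx
    have hfd0 : fderiv ℝ φ x = 0 := by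
      by_contra h
      exact hx (hφ3 (support_fderiv_subset ℝ (Function.mem_support.2 h)))
    simp [diverg, hfd0]
  have heq2 : ∫ x, v x * diverg φ x = ∑ i, ∫ x, v x * fderiv ℝ (ψ i) x (e i) := by
    rw [← integral_finset_sum _ (fun i _ => hint_i i)]
    congr 1
    funext x
    rw [diverg, Finset.mul_sum]
    congr 1 with i
    rw [hfd]
  have habs : ∀ i, |∫ x, v x * fderiv ℝ (ψ i) x (e i)| ≤ (L : ℝ) * (volume (closure Ω')).toReal := by
    intro i
    have h1 := key_ibp_bound v hv (ψ i) (hψC1 i) (hψc i) (e i)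
    have hnorm : ‖e i‖ = 1 := by
      simp [he, EuclideanSpace.norm_single]
    rw [hnorm, mul_one] at h1
    refine h1.trans ?_
    apply mul_le_mul_of_nonneg_left _ (NNReal.coe_nonneg L)
    have hint_abs : Integrable fun x : Euc N => |ψ i x| :=
      ((hψC1 i).continuous.integrable_of_hasCompactSupport (hψc i)).abs
    have e3 : ∫ x, |ψ i x| = ∫ x in tsupport φ, |ψ i x| := by
      symm
      apply setIntegral_eq_integral_of_forall_compl_eq_zero
      intro x hx
      simp [hψ, image_eq_zero_of_notMem_tsupport hx]
    rw [e3]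
    calc ∫ x in tsupport φ, |ψ i x|
        ≤ ∫ _x in tsupport φ, (1:ℝ) := by
          apply setIntegral_mono_on hint_abs.integrableOn
            (integrableOn_const hφ2.measure_lt_top.ne) hφ2.measurableSet
          intro x _
          exact (coord_abs_le_norm (φ x) i).trans (hφ4 x)
      _ = (volume (tsupport φ)).toReal := by simp; rfl
      _ ≤ (volume (closure Ω')).toReal := by
          apply ENNReal.toReal_mono hcomp.measure_lt_top.ne
          exact measure_mono (hφ3.trans subset_closure)
  calc ∫ x in Ω', v x * diverg φ x
      ≤ |∫ x in Ω', v x * diverg φ x| := le_abs_self _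
    _ = |∑ i, ∫ x, v x * fderiv ℝ (ψ i) x (e i)| := by rw [heq1, heq2]
    _ ≤ ∑ i : Fin N, |∫ x, v x * fderiv ℝ (ψ i) x (e i)| := Finset.abs_sum_le_sum_abs _ _
    _ ≤ ∑ _i : Fin N, (L : ℝ) * (volume (closure Ω')).toReal := Finset.sum_le_sum fun i _ => habs i
    _ = (L : ℝ) * N * (volume (closure Ω')).toReal := by
        rw [Finset.sum_const, Finset.card_univ, Fintype.card_fin]
        simp [nsmul_eq_mul]; ring

lemma lipschitz_truncInv {m : ℝ} (hm : 0 < m) (C : Set (Euc N)) :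
    LipschitzWith ((m^2).toNNReal) (fun y : Euc N => (max (infDist y C) m⁻¹)⁻¹) := by
  have hg : LipschitzWith ((m^2).toNNReal) (fun t : ℝ => (max t m⁻¹)⁻¹) := by
    apply LipschitzWith.of_dist_le_mul
    intro a b
    rw [Real.dist_eq, Real.dist_eq, Real.coe_toNNReal _ (by positivity)]
    set A := max a m⁻¹ with hA
    set B := max b m⁻¹ with hB
    have hA0 : m⁻¹ ≤ A := le_max_right _ _
    have hB0 : m⁻¹ ≤ B := le_max_right _ _
    have hmi : 0 < m⁻¹ := by positivity
    have hApos : 0 < A := lt_of_lt_of_le hmi hA0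
    have hBpos : 0 < B := lt_of_lt_of_le hmi hB0
    have key : A⁻¹ - B⁻¹ = (B - A) * (A * B)⁻¹ := by
      field_simp
    rw [key, abs_mul]
    have h1 : |B - A| ≤ |a - b| := by
      have h := abs_max_sub_max_le_abs b a m⁻¹
      rw [abs_sub_comm b a] at h
      exact h
    have h2 : |(A * B)⁻¹| ≤ m ^ 2 := by
      rw [abs_of_pos (by positivity)]
      rw [inv_le_comm₀ (by positivity) (by positivity)]
      calc (m ^ 2)⁻¹ = m⁻¹ * m⁻¹ := by rw [sq, mul_inv]
        _ ≤ A * B := mul_le_mul hA0 hB0 (le_of_lt hmi) (le_of_lt hApos)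
    calc |B - A| * |(A * B)⁻¹| ≤ |a - b| * (m ^ 2) :=
          mul_le_mul h1 h2 (abs_nonneg _) (abs_nonneg _)
      _ = m ^ 2 * |a - b| := by ring
  have := hg.comp (lipschitz_infDist_pt C)
  rw [mul_one] at this
  exact this

lemma density_zero_below {N : ℕ} {Ω C : Set (Euc N)}
    (hclosed : closure C ∩ Ω = C) (hvol : volume C = 0)
    {x : Euc N} (hx : x ∈ C) (s : ℝ) :
    HasDensity {y | y ∈ Ω ∧ (infDist y C)⁻¹ < s} x 0 := by
  obtain ⟨δ, hδ, hkey⟩ : ∃ δ > 0, ∀ ρ : ℝ, ρ ≤ δ →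
      volume ({y | y ∈ Ω ∧ (infDist y C)⁻¹ < s} ∩ ball x ρ) = 0 := by
    rcases le_or_gt s 0 with hs | hs
    · refine ⟨1, one_pos, fun ρ _ => ?_⟩
      have hemp : {y | y ∈ Ω ∧ (infDist y C)⁻¹ < s} ∩ ball x ρ = ∅ := by
        ext y
        simp only [mem_inter_iff, mem_setOf_eq, mem_empty_iff_false, iff_false, not_and]
        rintro ⟨_, h2⟩ _
        have h3 : (0:ℝ) ≤ (infDist y C)⁻¹ := inv_nonneg.2 infDist_nonneg
        linarith
      rw [hemp]
      exact measure_empty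
    · refine ⟨s⁻¹, inv_pos.2 hs, fun ρ hρ => ?_⟩
      apply measure_mono_null _ hvol
      rintro y ⟨⟨hyΩ, hys⟩, hyb⟩
      have hle : infDist y C < s⁻¹ :=
        lt_of_le_of_lt (infDist_le_dist_of_mem hx) (lt_of_lt_of_le (mem_ball.1 hyb) hρ)
      have hd0 : infDist y C = 0 := by
        by_contra h
        have hpos : 0 < infDist y C := lt_of_le_of_ne infDist_nonneg (Ne.symm h)
        have : s < (infDist y C)⁻¹ := (lt_inv_comm₀ hpos hs).1 hle
        linarith
      rw [← hclosed]
      exact ⟨(mem_closure_iff_infDist_zero ⟨x, hx⟩).2 hd0, hyΩ⟩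
  rw [HasDensity, show ENNReal.ofReal 0 = 0 by simp]
  refine Tendsto.congr' ?_ tendsto_const_nhds
  filter_upwards [Ioo_mem_nhdsGT hδ] with ρ hρ
  simp [hkey ρ (le_of_lt hρ.2)]

lemma upper_false {N : ℕ} {Ω C : Set (Euc N)} (hΩ : IsOpen Ω)
    (hclosed : closure C ∩ Ω = C) (hvol : volume C = 0)
    {x : Euc N} (hx : x ∈ C) (hxΩ : x ∈ Ω) (s : ℝ)
    (hA : HasDensity {y | y ∈ Ω ∧ s < (infDist y C)⁻¹} x 0) : False := by
  have hB := density_zero_below hclosed hvol hx (s+1)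
  obtain ⟨ε, hε, hball⟩ := Metric.isOpen_iff.1 hΩ x hxΩ
  set A := {y | y ∈ Ω ∧ s < (infDist y C)⁻¹} with hAdef
  set B := {y | y ∈ Ω ∧ (infDist y C)⁻¹ < s + 1} with hBdef
  have hsum : Tendsto (fun ρ : ℝ => volume (A ∩ ball x ρ) / volume (ball x ρ)
      + volume (B ∩ ball x ρ) / volume (ball x ρ)) (𝓝[>] 0) (𝓝 0) := by
    have := Tendsto.add hA hB
    simpa using this
  have hev : ∀ᶠ ρ in 𝓝[>] (0:ℝ), (1:ℝ≥0∞) ≤ volume (A ∩ ball x ρ) / volume (ball x ρ)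
      + volume (B ∩ ball x ρ) / volume (ball x ρ) := by
    filter_upwards [Ioo_mem_nhdsGT hε] with ρ hρ
    have hsub : ball x ρ ⊆ (A ∩ ball x ρ) ∪ (B ∩ ball x ρ) := by
      intro y hy
      have hyΩ : y ∈ Ω := hball (ball_subset_ball (le_of_lt hρ.2) hy)
      rcases lt_or_ge s ((infDist y C)⁻¹) with h | h
      · exact Or.inl ⟨⟨hyΩ, h⟩, hy⟩
      · exact Or.inr ⟨⟨hyΩ, by linarith⟩, hy⟩
    have h1 : volume (ball x ρ) ≤ volume (A ∩ ball x ρ) + volume (B ∩ ball x ρ) :=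
      (measure_mono hsub).trans (measure_union_le _ _)
    have hne : volume (ball x ρ) ≠ 0 := (measure_ball_pos _ x hρ.1).ne'
    have hnetop : volume (ball x ρ) ≠ ⊤ := measure_ball_lt_top.ne
    calc (1:ℝ≥0∞) = volume (ball x ρ) / volume (ball x ρ) := (ENNReal.div_self hne hnetop).symm
      _ ≤ (volume (A ∩ ball x ρ) + volume (B ∩ ball x ρ)) / volume (ball x ρ) :=
          ENNReal.div_le_div_right h1 _
      _ = _ := ENNReal.add_div
  have hcontra : (1:ℝ≥0∞) ≤ 0 := ge_of_tendsto hsum hev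
  simp at hcontra

/-- if `C ⊆ Ω` is relatively closed in `Ω` and `λ^N(C) = 0`, then `C` is
`GBV`-polar in `Ω`. -/
theorem statement3 {N : ℕ} (Ω : Set (Euc N)) (hΩ : IsOpen Ω)
    (C : Set (Euc N)) (hC : C ⊆ Ω) (hclosed : closure C ∩ Ω = C)
    (hvol : volume C = 0) :
    GBVPolar C Ω := by
  rcases C.eq_empty_or_nonempty with rfl | hne
  · -- C = ∅ : take u = 0
    refine ⟨fun _ => 0, ⟨aemeasurable_const, ?_⟩, empty_subset _⟩
    intro m hm Ω' hΩ' hcomp hsub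
    have htrunc : (fun x : Euc N => max (-m) (min ((fun _ : Euc N => (0:ℝ)) x) m))
        = fun _ : Euc N => (0:ℝ) := by
      funext x
      simp [min_eq_left (le_of_lt hm), max_eq_right (neg_nonpos.2 (le_of_lt hm))]
    rw [MemBV, htrunc]
    constructor
    · exact integrableOn_const (lt_of_le_of_lt (measure_mono subset_closure)
        hcomp.measure_lt_top).ne
    · exact lt_of_le_of_lt (variation_le_of_lipschitz _ (LipschitzWith.const (0:ℝ)) Ω' hcomp)
        ENNReal.ofReal_lt_top
  · -- C nonempty : take u = (infDist · C)⁻¹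
    have humeas : Measurable fun y : Euc N => (infDist y C)⁻¹ :=
      (continuous_infDist_pt C).measurable.inv
    refine ⟨fun y => (infDist y C)⁻¹, ⟨humeas.aemeasurable, ?_⟩, ?_⟩
    · -- GBV property
      intro m hm Ω' hΩ' hcomp hsub
      set v : Euc N → ℝ := fun y => (max (infDist y C) m⁻¹)⁻¹ with hv
      have hvlip := lipschitz_truncInv hm C
      have hΩ'sub : Ω' ⊆ Ω := subset_closure.trans hsub
      have hfin : volume Ω' < ⊤ :=
        lt_of_le_of_lt (measure_mono subset_closure) hcomp.measure_lt_top
      have haeeq : (fun x : Euc N => max (-m) (min ((infDist x C)⁻¹) m))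
          =ᵐ[volume.restrict Ω'] v := by
        have hsubnull :
            {y : Euc N | ¬ (max (-m) (min ((infDist y C)⁻¹) m) = v y)} ∩ Ω' ⊆ C := by
          rintro y ⟨hy, hyΩ'⟩
          by_contra hyC
          apply hy
          have hyncl : y ∉ closure C := fun hcl => hyC (hclosed ▸ ⟨hcl, hΩ'sub hyΩ'⟩)
          have hd : 0 < infDist y C := by
            rw [← infDist_closure]
            exact (isClosed_closure.notMem_iff_infDist_pos hne.closure).1 hyncl
          have h1 : (max (infDist y C) m⁻¹)⁻¹ = min ((infDist y C)⁻¹) m := by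
            rcases le_total (infDist y C) m⁻¹ with h | h
            · rw [max_eq_right h, inv_inv, min_eq_right ((le_inv_comm₀ hd hm).1 h)]
            · rw [max_eq_left h, min_eq_left ((inv_le_comm₀ hd hm).2 h)]
          show max (-m) (min ((infDist y C)⁻¹) m) = (max (infDist y C) m⁻¹)⁻¹
          rw [h1, max_eq_right]
          exact le_trans (neg_nonpos.2 (le_of_lt hm))
            (le_min (inv_nonneg.2 infDist_nonneg) (le_of_lt hm))
        rw [Filter.EventuallyEq, ae_iff, Measure.restrict_apply' hΩ'.measurableSet]
        exact measure_mono_null hsubnull hvol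
      constructor
      · -- integrability of the truncation
        apply Integrable.mono' (g := fun _ => m) (integrableOn_const hfin.ne)
        · exact (measurable_const.max (humeas.min measurable_const)).aestronglyMeasurable
        · apply Filter.Eventually.of_forall
          intro y
          rw [Real.norm_eq_abs, abs_le]
          exact ⟨le_max_left _ _, max_le (by linarith) (min_le_right _ _)⟩
      · -- finiteness of the variation
        have hvar : variation
            (fun x : Euc N => max (-m) (min ((fun y : Euc N => (infDist y C)⁻¹) x) m)) Ω'
            = variation v Ω' := by
          simp only [variation]
          apply iSup_congr; intro φ; apply iSup_congr; intro hφ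
          congr 1
          exact integral_congr_ae (haeeq.mul (Filter.EventuallyEq.refl _ _))
        rw [hvar]
        exact lt_of_le_of_lt (variation_le_of_lipschitz v hvlip Ω' hcomp) ENNReal.ofReal_lt_top
    · -- the polarity inclusion
      intro x hxC
      have hxΩ : x ∈ Ω := hC hxC
      refine ⟨hxΩ, Or.inl ⟨?_, ?_⟩⟩
      · have hempty : {t : EReal | ∃ s : ℝ, t = (s : EReal) ∧
            HasDensity {y | y ∈ Ω ∧ s < (fun y : Euc N => (infDist y C)⁻¹) y} x 0} = ∅ := by
          rw [eq_empty_iff_forall_notMem]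
          rintro t ⟨s, rfl, hdens⟩
          exact upper_false hΩ hclosed hvol hxC hxΩ s hdens
        rw [approxUpper, hempty, sInf_empty]
      · rw [approxLower, sSup_eq_top]
        intro b hb
        obtain ⟨r, hr1, _⟩ := EReal.exists_between_coe_real hb
        exact ⟨(r : EReal), ⟨r, rfl, density_zero_below hclosed hvol hxC r⟩, hr1⟩
end
end
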